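/- The collection R = { X ⊆ 2^ω : the Raisonnier filter F_X is rapid } is a σ-ideal on 2^ω: ∅ ∈ R, R is closed under subsets (Y ⊆ X ∈ R implies Y ∈ R), and R is closed under countable unions (if X_n ∈ R for all n < ω then ⋃_{n<ω} X_n ∈ R). -/

import Mathlib

open Filter Set

/-- The splitting point of two distinct elements of Cantor space. -/
noncomputable def splitPt (x y : ℕ → Bool) : ℕ := sInf {n | x n ≠ y n}

/-- The set of splitting points of a set `X ⊆ 2^ω`. -/
def splitPts (X : Set (ℕ → Bool)) : Set ℕ :=
  {k | ∃ x ∈ X, ∃ y ∈ X, x ≠ y ∧ splitPt x y = k}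

/-- The Raisonnier filter of `X ⊆ 2^ω`. -/
def raisonnier (X : Set (ℕ → Bool)) : Set (Set ℕ) :=
  {a | ∃ Y : ℕ → Set (ℕ → Bool), X ⊆ (⋃ n, Y n) ∧ (⋃ n, splitPts (Y n)) ⊆ a}

/-- A family `F` of subsets of ℕ is rapid if for every strictly increasing `f : ℕ → ℕ`
there is `a ∈ F` with `|a ∩ [0, f n)| ≤ n` for all `n`. (The trivial filter `𝒫(ℕ)`
trivially satisfies this.) -/
def IsRapid (F : Set (Set ℕ)) : Prop :=
  ∀ f : ℕ → ℕ, StrictMono f → ∃ a ∈ F, ∀ n, (a ∩ Set.Iio (f n)).ncard ≤ n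

/-- The Raisonnier ideal: the collection of `X ⊆ 2^ω` whose Raisonnier filter is rapid. -/
def Rideal : Set (Set (ℕ → Bool)) := {X | IsRapid (raisonnier X)}

lemma sum_div_two_pow (n : ℕ) : ∀ K, ∑ k ∈ Finset.range K, n / 2 ^ (k + 1) ≤ n := by
  induction n using Nat.strong_induction_on with
  | _ n ih =>
    intro K
    rcases Nat.eq_zero_or_pos n with rfl | hn
    · simp
    cases K with
    | zero => simp
    | succ K =>
      rw [Finset.sum_range_succ']
      have h1 : ∀ k, n / 2 ^ (k + 1 + 1) = (n / 2) / 2 ^ (k + 1) := by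
        intro k
        rw [Nat.div_div_eq_div_mul]
        ring_nf
      calc (∑ k ∈ Finset.range K, n / 2 ^ (k + 1 + 1)) + n / 2 ^ (0 + 1)
          = (∑ k ∈ Finset.range K, (n / 2) / 2 ^ (k + 1)) + n / 2 := by
            simp only [h1]; norm_num
        _ ≤ n / 2 + n / 2 := by
            have := ih (n / 2) (Nat.div_lt_self hn one_lt_two) K
            omega
        _ ≤ n := by omega

theorem stmt15 :
    (∅ ∈ Rideal) ∧
    (∀ X ∈ Rideal, ∀ Y : Set (ℕ → Bool), Y ⊆ X → Y ∈ Rideal) ∧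
    (∀ Xn : ℕ → Set (ℕ → Bool), (∀ n, Xn n ∈ Rideal) → (⋃ n, Xn n) ∈ Rideal) := by
  refine ⟨?_, ?_, ?_⟩
  · intro f hf
    refine ⟨∅, ⟨fun _ => ∅, by simp, by simp [splitPts]⟩, by simp⟩
  · intro X hX Y hYX f hf
    obtain ⟨a, ⟨Z, hZ1, hZ2⟩, ha⟩ := hX f hf
    exact ⟨a, ⟨Z, hYX.trans hZ1, hZ2⟩, ha⟩
  · intro Xn hXn f hf
    -- for each k choose a witness with fast growth
    have key : ∀ k : ℕ, ∃ a ∈ raisonnier (Xn k),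
        ∀ m, (a ∩ Set.Iio (f (2 ^ (k + 1) * (m + 1)))).ncard ≤ m := by
      intro k
      have hg : StrictMono (fun m => f (2 ^ (k + 1) * (m + 1))) := by
        apply hf.comp
        intro m m' h
        have : (0:ℕ) < 2 ^ (k + 1) := Nat.pow_pos (by norm_num)
        exact (Nat.mul_lt_mul_left this).mpr (by omega)
      exact hXn k _ hg
    choose a ha hbound using key
    -- the per-k bound at level n
    have hb : ∀ k n : ℕ, (a k ∩ Set.Iio (f n)).ncard ≤ n / 2 ^ (k + 1) := by
      intro k n
      set m := n / 2 ^ (k + 1) with hm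
      have hlt : n < 2 ^ (k + 1) * (m + 1) := by
        have h2 : 0 < 2 ^ (k + 1) := Nat.pow_pos (by norm_num)
        have h3 : 2 ^ (k + 1) * m + n % 2 ^ (k + 1) = n := by rw [hm]; exact Nat.div_add_mod n _
        have h4 := Nat.mod_lt n h2
        rw [Nat.mul_succ]
        omega
      have hsub : a k ∩ Set.Iio (f n) ⊆ a k ∩ Set.Iio (f (2 ^ (k + 1) * (m + 1))) := by
        apply Set.inter_subset_inter_right
        intro x hx
        exact lt_of_lt_of_le hx (hf.monotone hlt.le)
      have hfin : (a k ∩ Set.Iio (f (2 ^ (k + 1) * (m + 1)))).Finite :=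
        (Set.finite_Iio _).subset Set.inter_subset_right
      exact (Set.ncard_le_ncard hsub hfin).trans (hbound k m)
    -- assemble the union witness
    refine ⟨⋃ k, a k, ?_, ?_⟩
    · choose Y hY1 hY2 using ha
      refine ⟨fun p => Y (Nat.unpair p).1 (Nat.unpair p).2, ?_, ?_⟩
      · intro x hx
        obtain ⟨k, hk⟩ := Set.mem_iUnion.1 hx
        obtain ⟨m, hm⟩ := Set.mem_iUnion.1 (hY1 k hk)
        exact Set.mem_iUnion.2 ⟨Nat.pair k m, by simp [Nat.unpair_pair]; exact hm⟩
      · intro x hx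
        obtain ⟨p, hp⟩ := Set.mem_iUnion.1 hx
        exact Set.mem_iUnion.2 ⟨(Nat.unpair p).1,
          hY2 _ (Set.mem_iUnion.2 ⟨(Nat.unpair p).2, hp⟩)⟩
    · intro n
      -- tails are empty
      have hempty : ∀ k, n ≤ k → a k ∩ Set.Iio (f n) = ∅ := by
        intro k hk
        have hfin : (a k ∩ Set.Iio (f n)).Finite :=
          (Set.finite_Iio _).subset Set.inter_subset_right
        have h0 : n / 2 ^ (k + 1) = 0 := by
          apply Nat.div_eq_of_lt
          calc n ≤ k := hk
            _ < 2 ^ k := Nat.lt_two_pow_self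
            _ < 2 ^ (k + 1) := by
              have : 0 < 2 ^ k := Nat.pow_pos (by norm_num)
              simp only [pow_succ]; omega
        have := hb k n
        rw [h0, Nat.le_zero] at this
        exact (Set.ncard_eq_zero hfin).1 this
      have hsub : (⋃ k, a k) ∩ Set.Iio (f n) ⊆
          ⋃ k ∈ Finset.range n, (a k ∩ Set.Iio (f n)) := by
        rintro x ⟨hx1, hx2⟩
        obtain ⟨k, hk⟩ := Set.mem_iUnion.1 hx1
        have hkn : k < n := by
          by_contra h
          have hx : x ∈ a k ∩ Set.Iio (f n) := ⟨hk, hx2⟩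
          rw [hempty k (le_of_not_gt h)] at hx
          exact hx
        exact Set.mem_biUnion (Finset.mem_range.2 hkn) ⟨hk, hx2⟩
      have hcard : ∀ K : ℕ, (⋃ k ∈ Finset.range K, (a k ∩ Set.Iio (f n))).ncard ≤
          ∑ k ∈ Finset.range K, n / 2 ^ (k + 1) := by
        intro K
        induction K with
        | zero => simp
        | succ K ihK =>
          rw [Finset.sum_range_succ]
          have heq : (⋃ k ∈ Finset.range (K + 1), (a k ∩ Set.Iio (f n))) =
              (⋃ k ∈ Finset.range K, (a k ∩ Set.Iio (f n))) ∪ (a K ∩ Set.Iio (f n)) := by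
            rw [Finset.range_add_one]
            simp [Set.biUnion_insert, Set.union_comm]
          rw [heq]
          calc ((⋃ k ∈ Finset.range K, (a k ∩ Set.Iio (f n))) ∪
                (a K ∩ Set.Iio (f n))).ncard
              ≤ (⋃ k ∈ Finset.range K, (a k ∩ Set.Iio (f n))).ncard +
                (a K ∩ Set.Iio (f n)).ncard := Set.ncard_union_le _ _
            _ ≤ _ := Nat.add_le_add ihK (hb K n)
      have hfinU : (⋃ k ∈ Finset.range n, (a k ∩ Set.Iio (f n))).Finite :=
        Set.Finite.biUnion (Finset.range n).finite_toSet
          (fun k _ => (Set.finite_Iio _).subset Set.inter_subset_right)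
      calc ((⋃ k, a k) ∩ Set.Iio (f n)).ncard
          ≤ (⋃ k ∈ Finset.range n, (a k ∩ Set.Iio (f n))).ncard :=
            Set.ncard_le_ncard hsub hfinU
        _ ≤ ∑ k ∈ Finset.range n, n / 2 ^ (k + 1) := hcard n
        _ ≤ n := sum_div_two_pow n n
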